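/- arXiv:2007.12953 — 5 statements merged into one kernel-verified Lean document; each statement's English description precedes it below -/
import Mathlib

section
/- Let F : ℝ² → ℝ be a strictly convex gauge, i.e. F is convex, positively 1-homogeneous, positive on nonzero vectors, and satisfies F(v + w) < F(v) + F(w) whenever v, w are nonzero and do not lie on a common ray (¬ SameRay ℝ v w). Let μ be a finite Borel measure on a measurable space X and let f : X → ℝ² be Bochner integrable with F ∘ f integrable, and suppose there is NO single vector w ∈ ℝ² such that f(x) is a nonnegative multiple of w for μ-almost every x. Then F(∫ f dμ) < ∫ F(f(x)) dμ(x). -/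
open MeasureTheory

theorem stmt_2
    {X : Type*} [MeasurableSpace X] (μ : Measure X) [IsFiniteMeasure μ]
    (F : EuclideanSpace ℝ (Fin 2) → ℝ)
    (hconv : ConvexOn ℝ Set.univ F)
    (hhom : ∀ c : ℝ, 0 ≤ c → ∀ v, F (c • v) = c * F v)
    (hpos : ∀ v : EuclideanSpace ℝ (Fin 2), v ≠ 0 → 0 < F v)
    (hstrict : ∀ v w : EuclideanSpace ℝ (Fin 2), v ≠ 0 → w ≠ 0 →
      ¬ SameRay ℝ v w → F (v + w) < F v + F w)
    (f : X → EuclideanSpace ℝ (Fin 2))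
    (hf : Integrable f μ)
    (hFf : Integrable (fun x => F (f x)) μ)
    (hnotray : ¬ ∃ w : EuclideanSpace ℝ (Fin 2),
      ∀ᵐ x ∂μ, ∃ c : ℝ, 0 ≤ c ∧ f x = c • w) :
    F (∫ x, f x ∂μ) < ∫ x, F (f x) ∂μ := by
  have hF0 : F 0 = 0 := by
    have := hhom 0 le_rfl 0
    simpa using this
  have hFnonneg : ∀ v, 0 ≤ F v := by
    intro v
    rcases eq_or_ne v 0 with h | h
    · simp [h, hF0]
    · exact (hpos v h).le
  have hsub : ∀ v w, F (v + w) ≤ F v + F w := by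
    intro v w
    have h := hconv.2 (Set.mem_univ v) (Set.mem_univ w)
      (by norm_num : (0:ℝ) ≤ 1/2) (by norm_num : (0:ℝ) ≤ 1/2) (by norm_num)
    have h2 : ((1:ℝ)/2) • v + ((1:ℝ)/2) • w = ((1:ℝ)/2) • (v + w) := by
      rw [smul_add]
    rw [h2, hhom _ (by norm_num)] at h
    simp only [smul_eq_mul] at h
    linarith
  set v₀ := ∫ x, f x ∂μ with hv₀
  obtain ⟨ℓ, hle, heq⟩ : ∃ ℓ : EuclideanSpace ℝ (Fin 2) →ₗ[ℝ] ℝ,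
      (∀ v, ℓ v ≤ F v) ∧ ℓ v₀ = F v₀ := by
    rcases eq_or_ne v₀ 0 with h | h
    · exact ⟨0, fun v => hFnonneg v, by simp [h, hF0]⟩
    · have hdom : ∀ z : (LinearPMap.mkSpanSingleton (K := ℝ) (L := ℝ) (σ := RingHom.id ℝ) v₀ (F v₀) h).domain,
          (LinearPMap.mkSpanSingleton (K := ℝ) (L := ℝ) (σ := RingHom.id ℝ) v₀ (F v₀) h) z ≤ F z := by
        rintro ⟨z, hz⟩
        obtain ⟨c, rfl⟩ := Submodule.mem_span_singleton.1 hz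
        rw [LinearPMap.mkSpanSingleton'_apply, RingHom.id_apply]
        rcases le_or_gt 0 c with hc | hc
        · rw [hhom c hc, smul_eq_mul]
        · calc c • F v₀ ≤ 0 := by
                have := hpos v₀ h
                rw [smul_eq_mul]
                nlinarith [this]
            _ ≤ F (c • v₀) := hFnonneg _
      obtain ⟨g, hg1, hg2⟩ := exists_extension_of_le_sublinear
        (LinearPMap.mkSpanSingleton (K := ℝ) (L := ℝ) (σ := RingHom.id ℝ) v₀ (F v₀) h) F
        (fun c hc x => hhom c hc.le x) hsub hdom
      refine ⟨g, hg2, ?_⟩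
      have := hg1 ⟨v₀, Submodule.mem_span_singleton_self v₀⟩
      exact this.trans (LinearPMap.mkSpanSingleton'_apply_self _ _ _ _)
  set L := LinearMap.toContinuousLinearMap ℓ with hL
  have hLeq : ∀ v, L v = ℓ v := fun v => rfl
  have hLf : Integrable (fun x => L (f x)) μ := L.integrable_comp hf
  have hint : ∫ x, L (f x) ∂μ = L v₀ := L.integral_comp_comm hf
  by_contra hlt
  push_neg at hlt
  have hnn : ∀ x, 0 ≤ F (f x) - L (f x) := fun x => sub_nonneg.2 (hle (f x))
  have hg : Integrable (fun x => F (f x) - L (f x)) μ := hFf.sub hLf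
  have h0 : ∫ x, (F (f x) - L (f x)) ∂μ = 0 := by
    rw [integral_sub hFf hLf, hint]
    have h1 : (0:ℝ) ≤ ∫ x, (F (f x) - L (f x)) ∂μ := integral_nonneg hnn
    rw [integral_sub hFf hLf, hint] at h1
    have : L v₀ = F v₀ := heq
    linarith
  have hae : ∀ᵐ x ∂μ, F (f x) = ℓ (f x) := by
    have := (integral_eq_zero_iff_of_nonneg hnn hg).1 h0
    filter_upwards [this] with x hx
    have h1 : F (f x) - L (f x) = 0 := hx
    have h2 : L (f x) = ℓ (f x) := rfl
    linarith
  -- key: the set {v | F v = ℓ v} nonzero elements lie on one ray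
  apply hnotray
  by_cases hex : ∃ w : EuclideanSpace ℝ (Fin 2), w ≠ 0 ∧ F w = ℓ w
  · obtain ⟨w, hw0, hwS⟩ := hex
    refine ⟨w, ?_⟩
    filter_upwards [hae] with x hx
    rcases eq_or_ne (f x) 0 with h | h
    · exact ⟨0, le_rfl, by simp [h]⟩
    · have hray : SameRay ℝ w (f x) := by
        by_contra hnr
        have h1 := hstrict w (f x) hw0 h hnr
        have h2 : ℓ (w + f x) ≤ F (w + f x) := hle _
        rw [map_add] at h2
        linarith [hwS, hx]
      obtain ⟨r, hr, hrw⟩ := hray.exists_pos_left hw0 h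
      exact ⟨r, hr.le, hrw.symm⟩
  · push_neg at hex
    refine ⟨0, ?_⟩
    filter_upwards [hae] with x hx
    rcases eq_or_ne (f x) 0 with h | h
    · exact ⟨0, le_rfl, by simp [h]⟩
    · exact absurd hx (hex (f x) h)
end

section
/- Let F : ℝ² → ℝ be a strictly convex gauge, i.e. F is convex, positively 1-homogeneous, positive on nonzero vectors, and satisfies F(v + w) < F(v) + F(w) whenever v, w are nonzero and do not lie on a common ray (¬ SameRay ℝ v w). Let μ be a nonzero finite Borel measure on a measurable space X and let ν : X → ℝ² be measurable with ‖ν(x)‖ = 1 for μ-almost every x. Then F(∫ ν dμ) = ∫ F(ν(x)) dμ(x) if and only if ν is μ-almost everywhere equal to a constant unit vector. -/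
open MeasureTheory

theorem stmt_3
    {X : Type*} [MeasurableSpace X] (μ : Measure X) [IsFiniteMeasure μ]
    (hμ : μ ≠ 0)
    (F : EuclideanSpace ℝ (Fin 2) → ℝ)
    (hconv : ConvexOn ℝ Set.univ F)
    (hhom : ∀ c : ℝ, 0 ≤ c → ∀ v, F (c • v) = c * F v)
    (hpos : ∀ v : EuclideanSpace ℝ (Fin 2), v ≠ 0 → 0 < F v)
    (hstrict : ∀ v w : EuclideanSpace ℝ (Fin 2), v ≠ 0 → w ≠ 0 →
      ¬ SameRay ℝ v w → F (v + w) < F v + F w)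
    (ν : X → EuclideanSpace ℝ (Fin 2))
    (hmeas : Measurable ν)
    (hunit : ∀ᵐ x ∂μ, ‖ν x‖ = 1) :
    F (∫ x, ν x ∂μ) = ∫ x, F (ν x) ∂μ ↔
      ∃ w : EuclideanSpace ℝ (Fin 2), ‖w‖ = 1 ∧ ∀ᵐ x ∂μ, ν x = w := by
  have hF0 : F 0 = 0 := by
    have := hhom 0 le_rfl 0
    simpa using this
  -- subadditivity
  have hsub : ∀ v w : EuclideanSpace ℝ (Fin 2), F (v + w) ≤ F v + F w := by
    intro v w
    have h := hconv.2 (Set.mem_univ v) (Set.mem_univ w)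
      (by norm_num : (0:ℝ) ≤ (1:ℝ)/2) (by norm_num : (0:ℝ) ≤ (1:ℝ)/2) (by norm_num)
    have h2 : F ((1/2 : ℝ) • (v + w)) = (1/2 : ℝ) * F (v + w) :=
      hhom _ (by norm_num) _
    rw [smul_add] at h2
    simp only [smul_eq_mul] at h
    linarith
  -- continuity of F
  have hFcont : Continuous F := by
    have := hconv.continuousOn isOpen_univ
    rw [← continuousOn_univ]
    exact this
  -- ν integrable
  have hνint : Integrable ν μ := by
    refine ⟨hmeas.aestronglyMeasurable, ?_⟩
    exact HasFiniteIntegral.of_bounded (C := 1) (hunit.mono fun x hx => hx.le)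
  -- F ∘ ν integrable
  have hFνint : Integrable (fun x => F (ν x)) μ := by
    obtain ⟨C, hC⟩ := (isCompact_closedBall (0:EuclideanSpace ℝ (Fin 2)) 1).exists_bound_of_continuousOn
      hFcont.continuousOn
    refine Integrable.mono' (integrable_const C) (hFcont.measurable.comp hmeas).aestronglyMeasurable
      (hunit.mono fun x hx => ?_)
    have hmem : ν x ∈ Metric.closedBall (0:EuclideanSpace ℝ (Fin 2)) 1 := by
      simp [Metric.mem_closedBall, dist_zero_right, hx]
    have := hC (ν x) hmem
    rw [Real.norm_eq_abs]
    calc |F (ν x)| ≤ ‖F (ν x)‖ := le_of_eq rfl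
    _ ≤ C := this
  set m : (EuclideanSpace ℝ (Fin 2)) := ∫ x, ν x ∂μ with hm
  constructor
  · intro heq
    -- obtain linear g ≤ F with g m = F m
    have hexists : ∃ g : (EuclideanSpace ℝ (Fin 2)) →ₗ[ℝ] ℝ, g m = F m ∧ ∀ v, g v ≤ F v := by
      by_cases hm0 : m = 0
      · exact ⟨0, by simp [hm0, hF0], fun v => by
          simpa using (by
            by_cases hv : v = 0
            · simp [hv, hF0]
            · exact (hpos v hv).le)⟩
      · have hLval : ∀ (c : ℝ) (hx : c • m ∈ Submodule.span ℝ ({m} : Set (EuclideanSpace ℝ (Fin 2)))),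
            ((LinearMap.toSpanSingleton ℝ ℝ (F m)).comp
              (LinearEquiv.toSpanNonzeroSingleton ℝ (EuclideanSpace ℝ (Fin 2)) m hm0).symm.toLinearMap)
              ⟨c • m, hx⟩ = c * F m := by
          intro c hx
          have hcoord : (LinearEquiv.toSpanNonzeroSingleton ℝ (EuclideanSpace ℝ (Fin 2)) m hm0).symm ⟨c • m, hx⟩ = c := by
            rw [LinearEquiv.symm_apply_eq]
            apply Subtype.ext
            simp
          simp only [LinearMap.coe_comp, LinearEquiv.coe_coe, Function.comp_apply, hcoord,
            LinearMap.toSpanSingleton_apply, smul_eq_mul]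
        obtain ⟨g, hg1, hg2⟩ := exists_extension_of_le_sublinear
          ⟨Submodule.span ℝ {m},
            ((LinearMap.toSpanSingleton ℝ ℝ (F m)).comp
              (LinearEquiv.toSpanNonzeroSingleton ℝ (EuclideanSpace ℝ (Fin 2)) m hm0).symm.toLinearMap)⟩
          F (fun c hc x => hhom c hc.le x) hsub (by
            rintro ⟨x, hx⟩
            obtain ⟨c, rfl⟩ := Submodule.mem_span_singleton.mp hx
            rw [LinearPMap.mk_apply, hLval c hx]
            rcases le_or_gt 0 c with hc | hc
            · rw [hhom c hc m]
            · have h1 : c • m ≠ 0 := smul_ne_zero hc.ne hm0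
              have h2 : 0 < F (c • m) := hpos _ h1
              have h3 : c * F m < 0 := mul_neg_of_neg_of_pos hc (hpos m hm0)
              linarith)
        refine ⟨g, ?_, hg2⟩
        have hmem : m ∈ Submodule.span ℝ ({m} : Set (EuclideanSpace ℝ (Fin 2))) :=
          Submodule.mem_span_singleton_self m
        have hmem' : (1:ℝ) • m ∈ Submodule.span ℝ ({m} : Set (EuclideanSpace ℝ (Fin 2))) := by
          simpa using hmem
        have h1 := hg1 ⟨m, hmem⟩
        rw [LinearPMap.mk_apply] at h1
        have hmm : (⟨m, hmem⟩ : Submodule.span ℝ ({m} : Set (EuclideanSpace ℝ (Fin 2)))) = ⟨(1:ℝ) • m, hmem'⟩ := by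
          apply Subtype.ext; simp
        rw [hmm] at h1
        rw [hLval 1 hmem', one_mul] at h1
        simpa using h1
    obtain ⟨g, hgm, hgle⟩ := hexists
    set G : (EuclideanSpace ℝ (Fin 2)) →L[ℝ] ℝ := LinearMap.toContinuousLinearMap g with hG
    have hGν : ∫ x, G (ν x) ∂μ = G m := (G.integral_comp_comm hνint).symm ▸ rfl
    have hGνint : Integrable (fun x => G (ν x)) μ := G.integrable_comp hνint
    -- F(ν x) - G(ν x) ≥ 0, integral zero
    have hdiff_nonneg : ∀ x, 0 ≤ F (ν x) - G (ν x) := fun x => sub_nonneg.mpr (hgle (ν x))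
    have hdiff_int : Integrable (fun x => F (ν x) - G (ν x)) μ := hFνint.sub hGνint
    have hdiff_zero : ∫ x, (F (ν x) - G (ν x)) ∂μ = 0 := by
      rw [integral_sub hFνint hGνint, hGν]
      have : (G m : ℝ) = g m := rfl
      rw [this, hgm, ← heq]
      ring
    have hae : ∀ᵐ x ∂μ, F (ν x) = G (ν x) := by
      have h := (integral_eq_zero_iff_of_nonneg_ae
        (Filter.Eventually.of_forall hdiff_nonneg) hdiff_int).mp hdiff_zero
      filter_upwards [h] with x hx
      have : F (ν x) - G (ν x) = 0 := hx
      linarith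
    -- the contact set is a subsingleton among unit vectors
    have hkey : ∀ v w : EuclideanSpace ℝ (Fin 2), ‖v‖ = 1 → ‖w‖ = 1 → F v = G v → F w = G w → v = w := by
      intro v w hv hw hFv hFw
      by_contra hne
      have hray : ¬ SameRay ℝ v w := (not_sameRay_iff_of_norm_eq (hv.trans hw.symm)).mpr hne
      have hv0 : v ≠ 0 := by intro h; rw [h] at hv; simp at hv
      have hw0 : w ≠ 0 := by intro h; rw [h] at hw; simp at hw
      have h1 : F (v + w) < F v + F w := hstrict v w hv0 hw0 hray
      have h2 : G (v + w) = G v + G w := map_add G v w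
      have h3 : G (v + w) ≤ F (v + w) := hgle (v + w)
      rw [hFv, hFw, ← h2] at h1
      linarith
    -- extract the constant
    have hall : ∀ᵐ x ∂μ, ‖ν x‖ = 1 ∧ F (ν x) = G (ν x) := hunit.and hae
    have hne : (ae μ).NeBot := ae_neBot.mpr hμ
    obtain ⟨x₀, hx₀⟩ := hall.exists
    refine ⟨ν x₀, hx₀.1, ?_⟩
    filter_upwards [hall] with x hx
    exact hkey _ _ hx.1 hx₀.1 hx.2 hx₀.2
  · rintro ⟨w, hw, hae⟩
    have h1 : ∫ x, ν x ∂μ = (μ Set.univ).toReal • w := by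
      rw [integral_congr_ae hae, integral_const, Measure.real]
    have h2 : ∫ x, F (ν x) ∂μ = (μ Set.univ).toReal * F w := by
      rw [integral_congr_ae (hae.mono fun x hx => by rw [hx]), integral_const, smul_eq_mul, Measure.real]
    rw [hm, h1, h2, hhom _ ENNReal.toReal_nonneg w]
end

section
/- Let F : ℝ² → ℝ be a strictly convex gauge, i.e. F is convex, positively 1-homogeneous, positive on nonzero vectors, and satisfies F(v + w) < F(v) + F(w) whenever v, w are nonzero and do not lie on a common ray (¬ SameRay ℝ v w). Let γ : [0,1] → ℝ² be continuously differentiable with γ(0) ≠ γ(1), and suppose ∫₀¹ F(γ'(t)) dt = F(γ(1) − γ(0)). Then for every t ∈ [0,1] the velocity γ'(t) is a nonnegative scalar multiple of γ(1) − γ(0), and the image of γ is contained in the closed segment [γ(0), γ(1)]. -/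
open intervalIntegral Set

/-- A continuous nonnegative function on `[0,1]` with zero integral vanishes on `[0,1]`. -/
lemma aux_zero_of_integral_zero {g : ℝ → ℝ} (hg : ContinuousOn g (Set.Icc 0 1))
    (hnn : ∀ t ∈ Set.Icc (0:ℝ) 1, 0 ≤ g t)
    (hint : ∫ t in (0:ℝ)..1, g t = 0) : ∀ t ∈ Set.Icc (0:ℝ) 1, g t = 0 := by
  by_contra hcon
  push_neg at hcon
  obtain ⟨t₀, ht₀, hgt₀⟩ := hcon
  have hpos : 0 < g t₀ := lt_of_le_of_ne (hnn t₀ ht₀) (Ne.symm hgt₀)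
  -- continuity within Icc at t₀ gives a ball where g > g t₀ / 2
  have hcontt := hg t₀ ht₀
  have hev : ∀ᶠ x in nhdsWithin t₀ (Set.Icc 0 1), g t₀ / 2 < g x := by
    have := hcontt (Ioi_mem_nhds (by linarith : g t₀ / 2 < g t₀))
    exact this
  rw [Filter.eventually_iff, mem_nhdsWithin] at hev
  obtain ⟨U, hUopen, hUt₀, hU⟩ := hev
  obtain ⟨δ, hδ, hball⟩ := Metric.isOpen_iff.mp hUopen t₀ hUt₀
  set c : ℝ := max 0 (t₀ - δ/2) with hc
  set d : ℝ := min 1 (t₀ + δ/2) with hd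
  have hcd : c < d := by
    rcases ht₀ with ⟨h0, h1⟩
    rcases lt_or_eq_of_le h1 with h1' | h1'
    · have : t₀ < d := lt_min h1' (by linarith)
      exact lt_of_le_of_lt (max_le h0 (by linarith)) this
    · have : c < 1 := max_lt one_pos (by rw [h1']; linarith)
      exact lt_of_lt_of_le this (le_min le_rfl (by rw [h1']; linarith))
  have hcdIcc : Set.Icc c d ⊆ Set.Icc 0 1 := by
    intro x hx
    exact ⟨le_trans (le_max_left 0 _) hx.1, le_trans hx.2 (min_le_left 1 _)⟩
  have hcdU : ∀ x ∈ Set.Icc c d, g t₀ / 2 < g x := by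
    intro x hx
    apply hU
    constructor
    · apply hball
      have hxlo : t₀ - δ/2 ≤ x := le_trans (le_max_right 0 (t₀ - δ/2)) hx.1
      have hxhi : x ≤ t₀ + δ/2 := le_trans hx.2 (min_le_right 1 (t₀ + δ/2))
      rw [Metric.mem_ball, Real.dist_eq, abs_lt]
      constructor <;> linarith
    · exact hcdIcc hx
  have h0c : (0:ℝ) ≤ c := le_max_left _ _
  have hd1 : d ≤ 1 := min_le_left _ _
  have hint1 : IntervalIntegrable g MeasureTheory.volume 0 c := by
    apply ContinuousOn.intervalIntegrable
    apply hg.mono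
    rw [Set.uIcc_of_le h0c]
    exact Set.Icc_subset_Icc le_rfl (le_trans hcd.le hd1)
  have hint2 : IntervalIntegrable g MeasureTheory.volume c d := by
    apply ContinuousOn.intervalIntegrable
    apply hg.mono
    rw [Set.uIcc_of_le hcd.le]
    exact hcdIcc
  have hint3 : IntervalIntegrable g MeasureTheory.volume d 1 := by
    apply ContinuousOn.intervalIntegrable
    apply hg.mono
    rw [Set.uIcc_of_le hd1]
    exact Set.Icc_subset_Icc (le_trans h0c hcd.le) le_rfl
  have hsplit : ∫ t in (0:ℝ)..1, g t =
      (∫ t in (0:ℝ)..c, g t) + (∫ t in c..d, g t) + (∫ t in d..(1:ℝ), g t) := by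
    rw [intervalIntegral.integral_add_adjacent_intervals hint1 hint2,
      intervalIntegral.integral_add_adjacent_intervals (hint1.trans hint2) hint3]
  have h1 : 0 ≤ ∫ t in (0:ℝ)..c, g t :=
    intervalIntegral.integral_nonneg h0c fun u hu =>
      hnn u ⟨hu.1, le_trans hu.2 (le_trans hcd.le hd1)⟩
  have h3 : 0 ≤ ∫ t in d..(1:ℝ), g t :=
    intervalIntegral.integral_nonneg hd1 fun u hu =>
      hnn u ⟨le_trans (le_trans h0c hcd.le) hu.1, hu.2⟩
  have h2 : (d - c) * (g t₀ / 2) ≤ ∫ t in c..d, g t := by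
    have := intervalIntegral.integral_mono_on hcd.le
      (intervalIntegrable_const : IntervalIntegrable (fun _ => g t₀ / 2) MeasureTheory.volume c d)
      hint2 (fun x hx => (hcdU x hx).le)
    simpa [smul_eq_mul, mul_div_assoc] using this
  have hposint : 0 < ∫ t in (0:ℝ)..1, g t := by
    rw [hsplit]
    have : 0 < (d - c) * (g t₀ / 2) := by
      apply mul_pos (by linarith) (by linarith)
    linarith
  rw [hint] at hposint
  exact lt_irrefl 0 hposint

theorem stmt_6
    (F : EuclideanSpace ℝ (Fin 2) → ℝ)
    (hconv : ConvexOn ℝ Set.univ F)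
    (hhom : ∀ c : ℝ, 0 ≤ c → ∀ v, F (c • v) = c * F v)
    (hpos : ∀ v : EuclideanSpace ℝ (Fin 2), v ≠ 0 → 0 < F v)
    (hstrict : ∀ v w : EuclideanSpace ℝ (Fin 2), v ≠ 0 → w ≠ 0 →
      ¬ SameRay ℝ v w → F (v + w) < F v + F w)
    (γ : ℝ → EuclideanSpace ℝ (Fin 2))
    (hγ : ContDiffOn ℝ 1 γ (Set.Icc 0 1))
    (hne : γ 0 ≠ γ 1)
    (heq : ∫ t in (0:ℝ)..1, F (derivWithin γ (Set.Icc 0 1) t) = F (γ 1 - γ 0)) :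
    (∀ t ∈ Set.Icc (0:ℝ) 1, ∃ c : ℝ, 0 ≤ c ∧
        derivWithin γ (Set.Icc 0 1) t = c • (γ 1 - γ 0)) ∧
      γ '' Set.Icc (0:ℝ) 1 ⊆ segment ℝ (γ 0) (γ 1) := by
  set γ' : ℝ → EuclideanSpace ℝ (Fin 2) := derivWithin γ (Set.Icc 0 1) with hγ'def
  set V : EuclideanSpace ℝ (Fin 2) := γ 1 - γ 0 with hVdef
  have hV : V ≠ 0 := sub_ne_zero.mpr (Ne.symm hne)
  have hFV : 0 < F V := hpos V hV
  -- basic properties of F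
  have hF0 : F 0 = 0 := by
    have := hhom 0 le_rfl 0
    simpa using this
  have hFnonneg : ∀ v : EuclideanSpace ℝ (Fin 2), 0 ≤ F v := by
    intro v
    by_cases h : v = 0
    · rw [h, hF0]
    · exact (hpos v h).le
  have hsub : ∀ x y : EuclideanSpace ℝ (Fin 2), F (x + y) ≤ F x + F y := by
    intro x y
    have h := hconv.2 (Set.mem_univ x) (Set.mem_univ y)
      (by norm_num : (0:ℝ) ≤ 1/2) (by norm_num : (0:ℝ) ≤ 1/2) (by norm_num)
    have h2 : F (x + y) = 2 * F ((1/2 : ℝ) • x + (1/2 : ℝ) • y) := by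
      rw [← hhom 2 (by norm_num)]
      congr 1
      rw [smul_add, smul_smul, smul_smul]
      norm_num
    rw [smul_eq_mul, smul_eq_mul] at h
    rw [h2]; linarith
  -- construct the supporting linear functional ℓ
  obtain ⟨ℓ₀, hℓ₀eq, hℓ₀le⟩ := exists_extension_of_le_sublinear
    (LinearPMap.mkSpanSingleton V (F V) hV) F
    (fun c hc x => hhom c hc.le x) hsub
    (by
      rintro ⟨x, hx⟩
      obtain ⟨a, ha⟩ := Submodule.mem_span_singleton.mp hx
      have hxeq : (⟨x, hx⟩ : (LinearPMap.mkSpanSingleton V (F V) hV).domain) =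
          ⟨a • V, ha ▸ hx⟩ := Subtype.ext ha.symm
      rw [hxeq, LinearPMap.mkSpanSingleton'_apply]
      simp only [smul_eq_mul, RingHom.id_apply]
      rcases le_or_gt 0 a with hc | hc
      · rw [hhom a hc V]
      · have : a • V ≠ 0 := smul_ne_zero hc.ne hV
        have h1 : 0 < F (a • V) := hpos _ this
        have h2 : a * F V < 0 := mul_neg_of_neg_of_pos hc hFV
        linarith)
  have hℓ₀V : ℓ₀ V = F V := by
    have := hℓ₀eq ⟨V, Submodule.mem_span_singleton_self V⟩
    rw [LinearPMap.mkSpanSingleton_apply] at this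
    exact this
  set ℓ : EuclideanSpace ℝ (Fin 2) →L[ℝ] ℝ := LinearMap.toContinuousLinearMap ℓ₀ with hℓdef
  have hℓle : ∀ v : EuclideanSpace ℝ (Fin 2), ℓ v ≤ F v := hℓ₀le
  have hℓV : ℓ V = F V := hℓ₀V
  -- continuity facts
  have hU : UniqueDiffOn ℝ (Set.Icc (0:ℝ) 1) := uniqueDiffOn_Icc one_pos
  have hγ'cont : ContinuousOn γ' (Set.Icc 0 1) :=
    hγ.continuousOn_derivWithin hU le_rfl
  have hFcont : Continuous F := by
    rw [← continuousOn_univ]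
    exact hconv.continuousOn isOpen_univ
  have hderivAt : ∀ x ∈ Set.Icc (0:ℝ) 1, HasDerivWithinAt γ (γ' x) (Set.Icc 0 1) x := by
    intro x hx
    exact (hγ.differentiableOn one_ne_zero x hx).hasDerivWithinAt
  have hintγ' : IntervalIntegrable γ' MeasureTheory.volume 0 1 := by
    apply ContinuousOn.intervalIntegrable
    rwa [Set.uIcc_of_le zero_le_one]
  -- FTC: ∫ γ' = V
  have hFTC : ∫ t in (0:ℝ)..1, γ' t = V := by
    rw [hVdef]
    apply intervalIntegral.integral_eq_sub_of_hasDeriv_right_of_le zero_le_one hγ.continuousOn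
      _ hintγ'
    intro x hx
    have h1 : HasDerivAt γ (γ' x) x :=
      (hderivAt x (Set.Ioo_subset_Icc_self hx)).hasDerivAt (Icc_mem_nhds hx.1 hx.2)
    exact h1.hasDerivWithinAt
  -- integrability of the two scalar functions
  have hintF : IntervalIntegrable (fun t => F (γ' t)) MeasureTheory.volume 0 1 := by
    apply ContinuousOn.intervalIntegrable
    rw [Set.uIcc_of_le zero_le_one]
    exact hFcont.comp_continuousOn hγ'cont
  have hintℓ : IntervalIntegrable (fun t => ℓ (γ' t)) MeasureTheory.volume 0 1 := by
    apply ContinuousOn.intervalIntegrable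
    rw [Set.uIcc_of_le zero_le_one]
    exact ℓ.continuous.comp_continuousOn hγ'cont
  have hℓint : ∫ t in (0:ℝ)..1, ℓ (γ' t) = F V := by
    rw [ℓ.intervalIntegral_comp_comm hintγ', hFTC, hℓV]
  -- the defect g is continuous, nonnegative, with zero integral
  have hkey : ∀ t ∈ Set.Icc (0:ℝ) 1, F (γ' t) = ℓ (γ' t) := by
    have hzero : ∀ t ∈ Set.Icc (0:ℝ) 1, F (γ' t) - ℓ (γ' t) = 0 := by
      apply aux_zero_of_integral_zero
      · exact (hFcont.comp_continuousOn hγ'cont).sub (ℓ.continuous.comp_continuousOn hγ'cont)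
      · intro t ht
        exact sub_nonneg.mpr (hℓle (γ' t))
      · rw [intervalIntegral.integral_sub hintF hintℓ, hℓint, heq]
        simp [hVdef]
    intro t ht
    have := hzero t ht
    linarith
  -- every velocity is a nonneg multiple of V
  have hmul : ∀ t ∈ Set.Icc (0:ℝ) 1, ∃ c : ℝ, 0 ≤ c ∧ γ' t = c • V := by
    intro t ht
    by_cases h0 : γ' t = 0
    · exact ⟨0, le_rfl, by rw [h0, zero_smul]⟩
    · have hray : SameRay ℝ V (γ' t) := by
        by_contra hnr
        have h1 : F (V + γ' t) < F V + F (γ' t) := hstrict V (γ' t) hV h0 hnr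
        have h2 : ℓ (V + γ' t) ≤ F (V + γ' t) := hℓle _
        rw [map_add, hℓV, ← hkey t ht] at h2
        linarith
      obtain ⟨r, hr, hrV⟩ := hray.exists_nonneg_left hV
      exact ⟨r, hr, hrV.symm⟩
  refine ⟨hmul, ?_⟩
  -- the scalar coefficient equals ℓ (γ' t) / F V
  have hc' : ∀ t ∈ Set.Icc (0:ℝ) 1, γ' t = (ℓ (γ' t) * (F V)⁻¹) • V := by
    intro t ht
    obtain ⟨c, hc0, hceq⟩ := hmul t ht
    rw [hceq, map_smul, smul_eq_mul, hℓV, mul_assoc, mul_inv_cancel₀ hFV.ne', mul_one]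
  -- the function γ t - (ℓ (γ t) / F V) • V is constant on Icc
  set h : ℝ → EuclideanSpace ℝ (Fin 2) := fun t => γ t - (ℓ (γ t) * (F V)⁻¹) • V with hhdef
  have hhcont : ContinuousOn h (Set.Icc 0 1) := by
    apply hγ.continuousOn.sub
    exact (((ℓ.continuous.comp_continuousOn hγ.continuousOn).mul continuousOn_const).smul
      continuousOn_const)
  have hhderiv : ∀ x ∈ Set.Ico (0:ℝ) 1, HasDerivWithinAt h 0 (Set.Ici x) x := by
    intro x hx
    have hxIcc : x ∈ Set.Icc (0:ℝ) 1 := ⟨hx.1, hx.2.le⟩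
    have H1 : HasDerivWithinAt γ (γ' x) (Set.Icc 0 1) x := hderivAt x hxIcc
    have H2 : HasDerivWithinAt (fun t => (ℓ (γ t) * (F V)⁻¹) • V)
        ((ℓ (γ' x) * (F V)⁻¹) • V) (Set.Icc 0 1) x := by
      exact ((ℓ.hasFDerivAt.comp_hasDerivWithinAt x H1).mul_const _).smul_const V
    have H : HasDerivWithinAt h (γ' x - (ℓ (γ' x) * (F V)⁻¹) • V) (Set.Icc 0 1) x :=
      H1.sub H2
    rw [← hc' x hxIcc, sub_self] at H
    exact H.mono_of_mem_nhdsWithin (Icc_mem_nhdsGE_of_mem hx)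
  have hconst : ∀ t ∈ Set.Icc (0:ℝ) 1, h t = h 0 :=
    constant_of_has_deriv_right_zero hhcont hhderiv
  -- monotonicity of t ↦ ℓ (γ t) on Icc
  have hmono : MonotoneOn (fun t => ℓ (γ t)) (Set.Icc (0:ℝ) 1) := by
    apply monotoneOn_of_deriv_nonneg (convex_Icc 0 1)
      (ℓ.continuous.comp_continuousOn hγ.continuousOn)
    · rw [interior_Icc]
      intro x hx
      have hxIcc : x ∈ Set.Icc (0:ℝ) 1 := Set.Ioo_subset_Icc_self hx
      have h1 : HasDerivAt γ (γ' x) x :=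
        (hderivAt x hxIcc).hasDerivAt (Icc_mem_nhds hx.1 hx.2)
      exact (ℓ.hasFDerivAt.comp_hasDerivAt x h1).differentiableAt.differentiableWithinAt
    · rw [interior_Icc]
      intro x hx
      have hxIcc : x ∈ Set.Icc (0:ℝ) 1 := Set.Ioo_subset_Icc_self hx
      have h1 : HasDerivAt γ (γ' x) x :=
        (hderivAt x hxIcc).hasDerivAt (Icc_mem_nhds hx.1 hx.2)
      have h2 : HasDerivAt (fun t => ℓ (γ t)) (ℓ (γ' x)) x :=
        ℓ.hasFDerivAt.comp_hasDerivAt x h1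
      have h3 : deriv (⇑ℓ ∘ γ) x = ℓ (γ' x) := h2.deriv
      rw [h3]
      obtain ⟨c, hc0, hceq⟩ := hmul x hxIcc
      rw [hceq, map_smul, smul_eq_mul, hℓV]
      exact mul_nonneg hc0 hFV.le
  -- endpoint value
  have hℓγ1 : ℓ (γ 1) - ℓ (γ 0) = F V := by
    rw [← map_sub, ← hVdef, hℓV]
  -- conclude segment membership
  rintro _ ⟨t, ht, rfl⟩
  set σ : ℝ := (ℓ (γ t) - ℓ (γ 0)) * (F V)⁻¹ with hσdef
  have hγt : γ t = γ 0 + σ • V := by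
    have h1 := hconst t ht
    have h2 : γ t - (ℓ (γ t) * (F V)⁻¹) • V = γ 0 - (ℓ (γ 0) * (F V)⁻¹) • V := h1
    have : γ t = γ 0 + ((ℓ (γ t) * (F V)⁻¹) - (ℓ (γ 0) * (F V)⁻¹)) • V := by
      rw [sub_smul]
      rw [sub_eq_sub_iff_sub_eq_sub] at h2
      rw [← h2]; abel
    rw [this, hσdef, sub_mul]
  have hσ0 : 0 ≤ σ := by
    have := hmono (Set.left_mem_Icc.mpr zero_le_one) ht ht.1
    apply mul_nonneg (by linarith) (inv_nonneg.mpr hFV.le)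
  have hσ1 : σ ≤ 1 := by
    have := hmono ht (Set.right_mem_Icc.mpr zero_le_one) ht.2
    have hle : ℓ (γ t) - ℓ (γ 0) ≤ F V := by linarith [hℓγ1]
    calc σ ≤ F V * (F V)⁻¹ := by
            apply mul_le_mul_of_nonneg_right hle (inv_nonneg.mpr hFV.le)
      _ = 1 := mul_inv_cancel₀ hFV.ne'
  refine ⟨1 - σ, σ, by linarith, hσ0, by ring, ?_⟩
  rw [hγt, hVdef]
  rw [smul_sub, sub_smul, one_smul]
  abel
end

section
/- Let F : ℝ² → ℝ be a strictly convex gauge, i.e. F is convex, positively 1-homogeneous, positive on nonzero vectors, and satisfies F(v + w) < F(v) + F(w) whenever v, w are nonzero and do not lie on a common ray (¬ SameRay ℝ v w). Fix x₁ ≠ x₂ in ℝ². Then the infimum of ∫₀¹ F(γ'(t)) dt over all continuously differentiable curves γ : [0,1] → ℝ² with γ(0) = x₁ and γ(1) = x₂ equals F(x₂ − x₁), the affine parametrization t ↦ (1−t)x₁ + t x₂ attains this infimum, and every continuously differentiable minimizer has image contained in the segment [x₁, x₂]. -/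
open intervalIntegral Set MeasureTheory

private lemma FzeroAux (F : EuclideanSpace ℝ (Fin 2) → ℝ)
    (hhom : ∀ c : ℝ, 0 ≤ c → ∀ v, F (c • v) = c * F v) : F 0 = 0 := by
  have := hhom 0 le_rfl 0
  simpa using this

/-- Key lower bound: over any subinterval, the energy dominates F of the displacement. -/
private lemma key_lb (F : EuclideanSpace ℝ (Fin 2) → ℝ)
    (hconv : ConvexOn ℝ Set.univ F)
    (hhom : ∀ c : ℝ, 0 ≤ c → ∀ v, F (c • v) = c * F v)
    (γ : ℝ → EuclideanSpace ℝ (Fin 2))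
    (hγ : ContDiffOn ℝ 1 γ (Set.Icc 0 1))
    {a b : ℝ} (ha : (0:ℝ) ≤ a) (hab : a ≤ b) (hb : b ≤ 1) :
    F (γ b - γ a) ≤ ∫ t in a..b, F (derivWithin γ (Set.Icc 0 1) t) := by
  set g : ℝ → EuclideanSpace ℝ (Fin 2) := derivWithin γ (Set.Icc 0 1) with hg
  have hF0 : F 0 = 0 := FzeroAux F hhom
  have hsub : Icc a b ⊆ Icc (0:ℝ) 1 := Icc_subset_Icc ha hb
  have hFcont : Continuous F :=
    continuousOn_univ.mp (hconv.continuousOn isOpen_univ)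
  rcases eq_or_lt_of_le hab with rfl | hlt
  · simp [hF0]
  have hgcont : ContinuousOn g (Icc (0:ℝ) 1) :=
    hγ.continuousOn_derivWithin (uniqueDiffOn_Icc one_pos) le_rfl
  have hgcont' : ContinuousOn g (Icc a b) := hgcont.mono hsub
  have hgint : IntegrableOn g (Icc a b) := hgcont'.integrableOn_Icc
  have hFgint : IntegrableOn (fun t => F (g t)) (Icc a b) :=
    (hFcont.comp_continuousOn hgcont').integrableOn_Icc
  -- FTC : ∫ g = γ b - γ a
  have hderiv : ∀ x ∈ Ioo a b, HasDerivWithinAt γ (g x) (Ioi x) x := by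
    intro x hx
    have hxI : x ∈ Icc (0:ℝ) 1 := hsub (Ioo_subset_Icc_self hx)
    have h1 : HasDerivWithinAt γ (g x) (Icc (0:ℝ) 1) x :=
      ((hγ.differentiableOn one_ne_zero) x hxI).hasDerivWithinAt
    have hnx : Icc (0:ℝ) 1 ∈ nhds x :=
      Icc_mem_nhds (lt_of_le_of_lt ha hx.1) (lt_of_lt_of_le hx.2 hb)
    exact (h1.hasDerivAt hnx).hasDerivWithinAt
  have hFTC : (∫ t in a..b, g t) = γ b - γ a :=
    integral_eq_sub_of_hasDeriv_right_of_le hab ((hγ.continuousOn).mono hsub) hderiv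
      (by rw [intervalIntegrable_iff_integrableOn_Icc_of_le hab]; exact hgint)
  -- Jensen on the restricted measure
  set μ : Measure ℝ := volume.restrict (Ioc a b) with hμ
  have hμuniv : μ Set.univ = ENNReal.ofReal (b - a) := by
    simp [hμ, Measure.restrict_apply_univ, Real.volume_Ioc]
  haveI : IsFiniteMeasure μ := by
    constructor; rw [hμuniv]; exact ENNReal.ofReal_lt_top
  haveI : NeZero μ := by
    constructor
    intro h
    rw [h] at hμuniv
    simp only [Measure.coe_zero, Pi.zero_apply] at hμuniv
    have : (0:ℝ) < b - a := by linarith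
    rw [eq_comm, ENNReal.ofReal_eq_zero] at hμuniv
    linarith
  have hfi : Integrable g μ := hgint.mono_set Ioc_subset_Icc_self
  have hgi : Integrable (F ∘ g) μ := hFgint.mono_set Ioc_subset_Icc_self
  have jensen := hconv.map_average_le hFcont.continuousOn isClosed_univ
    (Filter.Eventually.of_forall fun _ => mem_univ _) hfi hgi
  have htoReal : (μ Set.univ).toReal = b - a := by
    rw [hμuniv, ENNReal.toReal_ofReal (by linarith)]
  have havg1 : (⨍ x, g x ∂μ) = (b - a)⁻¹ • (γ b - γ a) := by
    rw [average_eq, measureReal_def, htoReal]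
    congr 1
    rw [hμ, ← intervalIntegral.integral_of_le hab]
    · exact hFTC
  have havg2 : (⨍ x, F (g x) ∂μ) = (b - a)⁻¹ * ∫ t in a..b, F (g t) := by
    rw [average_eq, measureReal_def, htoReal, smul_eq_mul]
    congr 1
    rw [hμ, ← intervalIntegral.integral_of_le hab]
  rw [havg1, havg2, hhom _ (inv_nonneg.mpr (by linarith))] at jensen
  have hba : (0:ℝ) < b - a := by linarith
  calc F (γ b - γ a) = (b - a) * ((b - a)⁻¹ * F (γ b - γ a)) := by
        field_simp
    _ ≤ (b - a) * ((b - a)⁻¹ * ∫ t in a..b, F (g t)) := by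
        exact mul_le_mul_of_nonneg_left jensen hba.le
    _ = ∫ t in a..b, F (g t) := by field_simp

theorem stmt_7
    (F : EuclideanSpace ℝ (Fin 2) → ℝ)
    (hconv : ConvexOn ℝ Set.univ F)
    (hhom : ∀ c : ℝ, 0 ≤ c → ∀ v, F (c • v) = c * F v)
    (hpos : ∀ v : EuclideanSpace ℝ (Fin 2), v ≠ 0 → 0 < F v)
    (hstrict : ∀ v w : EuclideanSpace ℝ (Fin 2), v ≠ 0 → w ≠ 0 →
      ¬ SameRay ℝ v w → F (v + w) < F v + F w)
    (x₁ x₂ : EuclideanSpace ℝ (Fin 2)) (hx : x₁ ≠ x₂) :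
    IsLeast
      {e : ℝ | ∃ γ : ℝ → EuclideanSpace ℝ (Fin 2),
        ContDiffOn ℝ 1 γ (Set.Icc 0 1) ∧ γ 0 = x₁ ∧ γ 1 = x₂ ∧
        e = ∫ t in (0:ℝ)..1, F (derivWithin γ (Set.Icc 0 1) t)}
      (F (x₂ - x₁)) ∧
    (∫ t in (0:ℝ)..1,
        F (derivWithin (fun s => (1 - s) • x₁ + s • x₂) (Set.Icc 0 1) t))
      = F (x₂ - x₁) ∧
    (∀ γ : ℝ → EuclideanSpace ℝ (Fin 2),
      ContDiffOn ℝ 1 γ (Set.Icc 0 1) → γ 0 = x₁ → γ 1 = x₂ →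
      (∫ t in (0:ℝ)..1, F (derivWithin γ (Set.Icc 0 1) t)) = F (x₂ - x₁) →
      γ '' Set.Icc (0:ℝ) 1 ⊆ segment ℝ x₁ x₂) := by
  have hFcont : Continuous F :=
    continuousOn_univ.mp (hconv.continuousOn isOpen_univ)
  -- facts about the affine curve
  have haff : ∀ t ∈ Icc (0:ℝ) 1,
      derivWithin (fun s : ℝ => (1 - s) • x₁ + s • x₂) (Set.Icc 0 1) t = x₂ - x₁ := by
    intro t ht
    have h1 : HasDerivAt (fun s : ℝ => (1 - s) • x₁ + s • x₂) (x₂ - x₁) t := by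
      have hA : HasDerivAt (fun s : ℝ => (1 - s)) (-1) t := by
        simpa using (hasDerivAt_id t).const_sub 1
      have h := (hA.smul_const x₁).add ((hasDerivAt_id t).smul_const x₂)
      rw [neg_one_smul, one_smul, neg_add_eq_sub] at h
      exact h
    exact (h1.hasDerivWithinAt).derivWithin (uniqueDiffOn_Icc one_pos t ht)
  have haffcd : ContDiffOn ℝ 1 (fun s : ℝ => (1 - s) • x₁ + s • x₂) (Set.Icc 0 1) :=
    (((contDiff_const.sub contDiff_id).smul contDiff_const).add
      (contDiff_id.smul contDiff_const)).contDiffOn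
  have hint_aff : (∫ t in (0:ℝ)..1,
      F (derivWithin (fun s : ℝ => (1 - s) • x₁ + s • x₂) (Set.Icc 0 1) t)) = F (x₂ - x₁) := by
    rw [intervalIntegral.integral_congr (g := fun _ => F (x₂ - x₁))]
    · simp
    · intro t ht
      rw [uIcc_of_le zero_le_one] at ht
      simp only
      rw [haff t ht]
  -- subadditivity of F
  have hsubadd : ∀ v w : EuclideanSpace ℝ (Fin 2), F (v + w) ≤ F v + F w := by
    intro v w
    have h := hconv.2 (mem_univ v) (mem_univ w)
      (by norm_num : (0:ℝ) ≤ 1/2) (by norm_num : (0:ℝ) ≤ 1/2) (by norm_num)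
    have heq : (1/2 : ℝ) • v + (1/2 : ℝ) • w = (1/2 : ℝ) • (v + w) := by module
    rw [heq, hhom (1/2) (by norm_num)] at h
    simp only [smul_eq_mul] at h
    linarith
  -- lower bound
  have hlower : ∀ γ : ℝ → EuclideanSpace ℝ (Fin 2),
      ContDiffOn ℝ 1 γ (Set.Icc 0 1) → γ 0 = x₁ → γ 1 = x₂ →
      F (x₂ - x₁) ≤ ∫ t in (0:ℝ)..1, F (derivWithin γ (Set.Icc 0 1) t) := by
    intro γ hγ h0 h1
    have := key_lb F hconv hhom γ hγ (le_refl (0:ℝ)) zero_le_one le_rfl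
    rwa [h0, h1] at this
  refine ⟨⟨⟨fun s : ℝ => (1 - s) • x₁ + s • x₂, haffcd, by simp, by simp, hint_aff.symm⟩, ?_⟩,
    hint_aff, ?_⟩
  · rintro e ⟨γ, hγ, h0, h1, rfl⟩
    exact hlower γ hγ h0 h1
  · rintro γ hγ h0 h1 heq z ⟨t, ht, rfl⟩
    set g : ℝ → EuclideanSpace ℝ (Fin 2) := derivWithin γ (Set.Icc 0 1) with hg
    have hgcont : ContinuousOn g (Icc (0:ℝ) 1) :=
      hγ.continuousOn_derivWithin (uniqueDiffOn_Icc one_pos) le_rfl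
    have hii : ∀ a b : ℝ, 0 ≤ a → a ≤ b → b ≤ 1 →
        IntervalIntegrable (fun t => F (g t)) volume a b := by
      intro a b ha hab hb
      apply ContinuousOn.intervalIntegrable
      apply (hFcont.comp_continuousOn (hgcont.mono _)).mono (subset_refl _)
      rw [uIcc_of_le hab]
      exact Icc_subset_Icc ha hb
    have hsplit : (∫ s in (0:ℝ)..t, F (g s)) + (∫ s in t..1, F (g s))
        = ∫ s in (0:ℝ)..1, F (g s) :=
      integral_add_adjacent_intervals (hii 0 t le_rfl ht.1 ht.2) (hii t 1 ht.1 ht.2 le_rfl)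
    set v := γ t - x₁ with hv
    set w := x₂ - γ t with hw
    have hvw : v + w = x₂ - x₁ := by rw [hv, hw]; abel
    have hI1 : F v ≤ ∫ s in (0:ℝ)..t, F (g s) := by
      have := key_lb F hconv hhom γ hγ le_rfl ht.1 ht.2
      rwa [h0] at this
    have hI2 : F w ≤ ∫ s in t..1, F (g s) := by
      have := key_lb F hconv hhom γ hγ ht.1 ht.2 le_rfl
      rwa [h1] at this
    have hEq : F v + F w = F (v + w) := by
      have h1' : F (v + w) ≤ F v + F w := hsubadd v w
      have h2' : F v + F w ≤ F (v + w) := by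
        rw [hvw, ← heq, ← hsplit]
        exact add_le_add hI1 hI2
      linarith
    by_cases hv0 : v = 0
    · have : γ t = x₁ := by rw [hv, sub_eq_zero] at hv0; exact hv0
      rw [this]; exact left_mem_segment ℝ x₁ x₂
    by_cases hw0 : w = 0
    · have : γ t = x₂ := by rw [hw, sub_eq_zero] at hw0; exact hw0.symm
      rw [this]; exact right_mem_segment ℝ x₁ x₂
    have hray : SameRay ℝ v w := by
      by_contra h
      exact absurd hEq.symm (ne_of_lt (hstrict v w hv0 hw0 h))
    obtain ⟨A, B, hA, hB, hAB, hvA, -⟩ := hray.exists_eq_smul_add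
    have hγt : γ t = (1 - A) • x₁ + A • x₂ := by
      have h1' : γ t = x₁ + v := by rw [hv]; abel
      rw [h1', hvA, hvw]
      module
    rw [hγt]
    exact ⟨1 - A, A, by linarith, hA, by ring, rfl⟩
end

section
/- Let K ⊆ ℝⁿ be a nonempty compact connected set with finite one-dimensional Hausdorff measure, H¹(K) < ∞. Then there exists a Lipschitz map f : [0,1] → ℝⁿ whose image is exactly K. -/
open MeasureTheory

section WazewskiAux

set_option linter.unusedSectionVars false

section Walk
open Metric List
variable {E : Type*} [PseudoMetricSpace E]

variable {E : Type*} [PseudoMetricSpace E]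

/-- A finite set is `δ`-connected if every nontrivial split admits a crossing pair
at distance at most `δ`. -/
def WConn (δ : ℝ) (S : Finset E) : Prop :=
  ∀ T ⊆ S, T.Nonempty → (∃ b ∈ S, b ∉ T) → ∃ a ∈ T, ∃ b ∈ S, b ∉ T ∧ dist a b ≤ δ

theorem exists_walk (δ : ℝ) :
    ∀ (N : ℕ) (S : Finset E), S.card ≤ N → WConn δ S → ∀ s ∈ S,
    ∃ l : List E, l ≠ [] ∧ l.head? = some s ∧ l.getLast? = some s ∧
      (∀ x ∈ l, x ∈ S) ∧ (∀ x ∈ S, x ∈ l) ∧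
      l.Chain' (fun a b => dist a b ≤ δ) ∧ l.length ≤ 2 * S.card - 1 := by
  intro N
  induction N with
  | zero =>
    intro S hS _ s hs
    exact absurd (Finset.card_pos.mpr ⟨s, hs⟩) (by omega)
  | succ N IH =>
    intro S hcard hConn s hs
    classical
    set S' := S.erase s with hS'def
    set e : E → E → Prop := fun a b => a ∈ S' ∧ b ∈ S' ∧ dist a b ≤ δ with he
    have hesymm : Symmetric e := by
      rintro a b ⟨ha, hb, hd⟩; exact ⟨hb, ha, by rwa [dist_comm]⟩
    set reach : E → E → Prop := fun a b => Relation.ReflTransGen e a b with hreach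
    -- inner induction: walks covering a reach-closed subset `R` of `S'`
    have inner : ∀ (M : ℕ) (R : Finset E), R.card ≤ M → R ⊆ S' →
        (∀ a ∈ R, ∀ b ∈ S', dist a b ≤ δ → b ∈ R) →
        ∃ l : List E, l ≠ [] ∧ l.head? = some s ∧ l.getLast? = some s ∧
          (∀ x ∈ l, x ∈ insert s R) ∧ (∀ x ∈ R, x ∈ l) ∧
          l.Chain' (fun a b => dist a b ≤ δ) ∧ l.length ≤ 2 * R.card + 1 := by
      intro M
      induction M with
      | zero =>
        intro R hR _ _
        have : R = ∅ := Finset.card_eq_zero.mp (by omega)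
        subst this
        exact ⟨[s], by simp, rfl, rfl, by simp, by simp, List.isChain_singleton _, by simp⟩
      | succ M IHM =>
        intro R hRcard hRS' hRclosed
        rcases R.eq_empty_or_nonempty with rfl | ⟨x, hxR⟩
        · exact ⟨[s], by simp, rfl, rfl, by simp, by simp, List.isChain_singleton _, by simp⟩
        set C : Finset E := S'.filter (fun z => reach x z) with hCdef
        have hCsub : C ⊆ S' := Finset.filter_subset _ _
        have hxS' : x ∈ S' := hRS' hxR
        have hxC : x ∈ C := Finset.mem_filter.mpr ⟨hxS', Relation.ReflTransGen.refl⟩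
        have hmemC : ∀ z, z ∈ C ↔ z ∈ S' ∧ reach x z := fun z => Finset.mem_filter
        have hreach_mem : ∀ z, reach x z → z ∈ R := by
          intro z h
          induction h with
          | refl => exact hxR
          | tail _ hstep ih => exact hRclosed _ ih _ hstep.2.1 hstep.2.2
        have hCR : C ⊆ R := fun z hz => hreach_mem z ((hmemC z).mp hz).2
        -- every element connected by an e-chain from a point of C lies in C
        have hchain_mem : ∀ (l : List E) (a : E), a ∈ C → List.Chain e a l →
            ∀ z ∈ a :: l, z ∈ C := by
          intro l
          induction l with
          | nil => intro a ha _ z hz; simp at hz; subst hz; exact ha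
          | cons d tl IHl =>
            intro a ha hch z hz
            rcases List.chain_cons.mp hch with ⟨had, htl⟩
            have hdC : d ∈ C :=
              (hmemC d).mpr ⟨had.2.1, Relation.ReflTransGen.tail ((hmemC a).mp ha).2 had⟩
            rcases List.mem_cons.mp hz with rfl | hz'
            · exact ha
            · exact IHl d hdC htl z hz'
        -- C is δ-connected
        have hCconn : WConn δ C := by
          intro T hTC hTne hTne'
          obtain ⟨a, haT⟩ := hTne
          obtain ⟨b, hbC', hbT⟩ := hTne'
          have haC : a ∈ C := hTC haT
          have hab : reach a b := by
            have hxa : reach x a := ((hmemC a).mp haC).2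
            have hxb : reach x b := ((hmemC b).mp hbC').2
            exact Relation.ReflTransGen.trans
              (haveI : Std.Symm e := ⟨fun _ _ h => hesymm h⟩; Std.Symm.symm (r := Relation.ReflTransGen e) _ _ hxa) hxb
          obtain ⟨l, hl, hlast⟩ := List.exists_isChain_cons_of_relationReflTransGen hab
          have hallC : ∀ z ∈ a :: l, z ∈ C := hchain_mem l a haC hl
          -- find switching pair
          have hswitch : ∀ (l' : List E) (c : E), c ∈ T → List.Chain e c l' →
              (c :: l').getLast (List.cons_ne_nil _ _) ∉ T →
              ∃ p ∈ T, ∃ q, q ∉ T ∧ q ∈ c :: l' ∧ dist p q ≤ δ := by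
            intro l'
            induction l' with
            | nil => intro c hc _ hlast'; simp at hlast'; exact absurd hc hlast'
            | cons d tl IHl =>
              intro c hc hch hlast'
              rcases List.chain_cons.mp hch with ⟨hcd, htl⟩
              by_cases hdT : d ∈ T
              · obtain ⟨p, hp, q, hq, hqmem, hpq⟩ := IHl d hdT htl
                  (by rwa [List.getLast_cons (List.cons_ne_nil _ _)] at hlast')
                exact ⟨p, hp, q, hq, List.mem_cons_of_mem _ hqmem, hpq⟩
              · exact ⟨c, hc, d, hdT, List.mem_cons_of_mem _ List.mem_cons_self, hcd.2.2⟩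
          have hbnotT : (a :: l).getLast (List.cons_ne_nil _ _) ∉ T := by
            rw [hlast]; exact hbT
          obtain ⟨p, hp, q, hq, hqmem, hpq⟩ := hswitch l a haT hl hbnotT
          exact ⟨p, hp, q, hallC q hqmem, hq, hpq⟩
        -- C has a neighbor of s
        have hsS' : s ∉ S' := Finset.notMem_erase s S
        have hy : ∃ y ∈ C, dist y s ≤ δ := by
          have hCS : C ⊆ S := hCsub.trans (Finset.erase_subset _ _)
          obtain ⟨a, haC, b, hbS, hbC, hab⟩ :=
            hConn C hCS ⟨x, hxC⟩ ⟨s, hs, fun h => hsS' (hCsub h)⟩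
          by_cases hbs : b = s
          · exact ⟨a, haC, by rwa [hbs] at hab⟩
          · exfalso
            have hbS' : b ∈ S' := Finset.mem_erase.mpr ⟨hbs, hbS⟩
            have haS' : a ∈ S' := hCsub haC
            exact hbC ((hmemC b).mpr
              ⟨hbS', Relation.ReflTransGen.tail ((hmemC a).mp haC).2 ⟨haS', hbS', hab⟩⟩)
        obtain ⟨y, hyC, hys⟩ := hy
        -- outer IH on C
        have hcardS : 1 ≤ S.card := Finset.card_pos.mpr ⟨s, hs⟩
        have hCcard : C.card ≤ N := by
          have h1 : C.card ≤ S'.card := Finset.card_le_card hCsub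
          have h2 : S'.card = S.card - 1 := Finset.card_erase_of_mem hs
          omega
        obtain ⟨w, hwne, hwhead, hwlast, hwsub, hwcover, hwchain, hwlen⟩ :=
          IH C hCcard hCconn y hyC
        -- inner IH on R \ C
        have hRCcard : (R \ C).card ≤ M := by
          have h1 : (R \ C).card = R.card - C.card := Finset.card_sdiff_of_subset hCR
          have h2 : 1 ≤ C.card := Finset.card_pos.mpr ⟨x, hxC⟩
          omega
        have hRCclosed : ∀ a ∈ R \ C, ∀ b ∈ S', dist a b ≤ δ → b ∈ R \ C := by
          intro a ha b hbS' hab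
          rcases Finset.mem_sdiff.mp ha with ⟨haR, haC⟩
          refine Finset.mem_sdiff.mpr ⟨hRclosed a haR b hbS' hab, fun hbC => haC ?_⟩
          exact (hmemC a).mpr ⟨hRS' haR,
            Relation.ReflTransGen.tail ((hmemC b).mp hbC).2
              ⟨hbS', hRS' haR, by rwa [dist_comm]⟩⟩
        obtain ⟨l', hl'ne, hl'head, hl'last, hl'sub, hl'cover, hl'chain, hl'len⟩ :=
          IHM (R \ C) hRCcard ((Finset.sdiff_subset).trans hRS') hRCclosed
        -- combine
        refine ⟨l' ++ w ++ [s], by simp [hl'ne], ?_, ?_, ?_, ?_, ?_, ?_⟩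
        · rw [List.append_assoc, List.head?_append_of_ne_nil _ hl'ne]; exact hl'head
        · rw [List.getLast?_concat]
        · intro z hz
          rcases List.mem_append.mp hz with hz1 | hz2
          · rcases List.mem_append.mp hz1 with hz3 | hz4
            · rcases Finset.mem_insert.mp (hl'sub z hz3) with rfl | hzRC
              · exact Finset.mem_insert_self _ _
              · exact Finset.mem_insert.mpr (Or.inr (Finset.mem_sdiff.mp hzRC).1)
            · exact Finset.mem_insert.mpr (Or.inr (hCR (hwsub z hz4)))
          · simp at hz2; subst hz2; exact Finset.mem_insert_self _ _
        · intro z hzR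
          by_cases hzC : z ∈ C
          · exact List.mem_append.mpr (Or.inl (List.mem_append.mpr (Or.inr (hwcover z hzC))))
          · exact List.mem_append.mpr (Or.inl (List.mem_append.mpr (Or.inl
              (hl'cover z (Finset.mem_sdiff.mpr ⟨hzR, hzC⟩)))))
        · unfold List.Chain' at hl'chain hwchain ⊢; rw [List.append_assoc, List.isChain_append]
          refine ⟨hl'chain, ?_, ?_⟩
          · rw [List.isChain_append]
            refine ⟨hwchain, by simp, ?_⟩
            intro p hp q hq
            rw [hwlast] at hp; simp at hp hq; subst hp; subst hq; exact hys
          · intro p hp q hq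
            rw [hl'last] at hp
            rw [List.head?_append_of_ne_nil _ hwne, hwhead] at hq
            simp at hp hq; subst hp; subst hq
            rwa [dist_comm]
        · have h2 : 1 ≤ C.card := Finset.card_pos.mpr ⟨x, hxC⟩
          have h3 : (R \ C).card = R.card - C.card := Finset.card_sdiff_of_subset hCR
          have h4 : C.card ≤ R.card := Finset.card_le_card hCR
          simp only [List.length_append, List.length_cons, List.length_nil]
          omega
    -- conclude outer from inner with R = S.erase s
    obtain ⟨l, hlne, hlhead, hllast, hlsub, hlcover, hlchain, hllen⟩ :=
      inner S'.card S' le_rfl (le_refl _) (fun _ _ b hb _ => hb)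
    have hins : insert s S' = S := Finset.insert_erase hs
    have hcardS : 1 ≤ S.card := Finset.card_pos.mpr ⟨s, hs⟩
    have hS'card : S'.card = S.card - 1 := Finset.card_erase_of_mem hs
    refine ⟨l, hlne, hlhead, hllast, fun z hz => hins ▸ hlsub z hz, ?_, hlchain, by omega⟩
    intro z hzS
    by_cases hzs : z = s
    · subst hzs
      rcases l with _ | ⟨a, t⟩
      · exact absurd rfl hlne
      · simp at hlhead; subst hlhead; exact List.mem_cons_self
    · exact hlcover z (Finset.mem_erase.mpr ⟨hzs, hzS⟩)

end Walk

section PL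
open Metric Set
variable {E : Type*} [NormedAddCommGroup E] [NormedSpace ℝ E]

variable {E : Type*} [NormedAddCommGroup E] [NormedSpace ℝ E]

/-- Piecewise linear interpolation of the sequence `q` at time `u`. -/
noncomputable def plInterp (q : ℕ → E) (u : ℝ) : E :=
  q ⌊u⌋₊ + (u - ⌊u⌋₊) • (q (⌊u⌋₊ + 1) - q ⌊u⌋₊)

lemma plInterp_natCast (q : ℕ → E) (i : ℕ) : plInterp q (i : ℝ) = q i := by
  simp [plInterp]

lemma plInterp_dist_floor {q : ℕ → E} {δ : ℝ} (hq : ∀ i, dist (q i) (q (i + 1)) ≤ δ)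
    {u : ℝ} (hu : 0 ≤ u) : dist (plInterp q u) (q ⌊u⌋₊) ≤ δ := by
  have h1 : plInterp q u - q ⌊u⌋₊ = (u - ⌊u⌋₊) • (q (⌊u⌋₊ + 1) - q ⌊u⌋₊) := by
    simp [plInterp]
  rw [dist_eq_norm, h1, norm_smul, Real.norm_eq_abs]
  have hfrac0 : (0:ℝ) ≤ u - ⌊u⌋₊ := sub_nonneg.mpr (Nat.floor_le hu)
  have hfrac1 : u - ⌊u⌋₊ ≤ 1 := by
    have := Nat.lt_floor_add_one u; linarith
  have hnorm : ‖q (⌊u⌋₊ + 1) - q ⌊u⌋₊‖ ≤ δ := by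
    rw [← dist_eq_norm, dist_comm]; exact hq _
  calc |u - ⌊u⌋₊| * ‖q (⌊u⌋₊ + 1) - q ⌊u⌋₊‖
      ≤ 1 * δ := by
        apply mul_le_mul _ hnorm (norm_nonneg _) zero_le_one
        rw [abs_of_nonneg hfrac0]; exact hfrac1
    _ = δ := one_mul _

lemma plInterp_lipschitz {q : ℕ → E} {δ : ℝ} (hq : ∀ i, dist (q i) (q (i + 1)) ≤ δ) :
    ∀ (d : ℕ) (u v : ℝ), 0 ≤ u → u ≤ v → ⌊v⌋₊ - ⌊u⌋₊ = d →
      dist (plInterp q u) (plInterp q v) ≤ δ * (v - u) := by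
  have hδ : 0 ≤ δ := le_trans dist_nonneg (hq 0)
  intro d
  induction d with
  | zero =>
    intro u v hu huv hd
    have hle : ⌊u⌋₊ ≤ ⌊v⌋₊ := Nat.floor_mono huv
    have hif : ⌊u⌋₊ = ⌊v⌋₊ := by omega
    have h1 : plInterp q u - plInterp q v = (u - v) • (q (⌊u⌋₊ + 1) - q ⌊u⌋₊) := by
      simp only [plInterp, ← hif]
      module
    rw [dist_eq_norm, h1, norm_smul, Real.norm_eq_abs]
    have hnorm : ‖q (⌊u⌋₊ + 1) - q ⌊u⌋₊‖ ≤ δ := by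
      rw [← dist_eq_norm, dist_comm]; exact hq _
    rw [abs_of_nonpos (by linarith), mul_comm, show -(u-v) = v - u by ring]
    apply mul_le_mul hnorm le_rfl (by linarith) hδ
  | succ d IHd =>
    intro u v hu huv hd
    set i := ⌊u⌋₊ with hi
    have hiv : i + 1 ≤ ⌊v⌋₊ := by omega
    have hv0 : 0 ≤ v := le_trans hu huv
    have hwv : ((i:ℝ) + 1) ≤ v := by
      calc ((i:ℝ) + 1) = ((i + 1 : ℕ) : ℝ) := by push_cast; ring
        _ ≤ (⌊v⌋₊ : ℝ) := by exact_mod_cast hiv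
        _ ≤ v := Nat.floor_le hv0
    have huw : u ≤ (i:ℝ) + 1 := le_of_lt (Nat.lt_floor_add_one u)
    have step1 : dist (plInterp q u) (plInterp q ((i:ℝ) + 1)) ≤ δ * (((i:ℝ) + 1) - u) := by
      have hcast : ((i:ℝ) + 1) = ((i + 1 : ℕ) : ℝ) := by push_cast; ring
      rw [hcast, plInterp_natCast]
      have h1 : plInterp q u - q (i + 1) = (u - (i:ℝ) - 1) • (q (i + 1) - q i) := by
        simp only [plInterp, ← hi]
        module
      rw [dist_eq_norm, h1, norm_smul, Real.norm_eq_abs]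
      have hnorm : ‖q (i + 1) - q i‖ ≤ δ := by
        rw [← dist_eq_norm, dist_comm]; exact hq _
      rw [abs_of_nonpos (by linarith), mul_comm, show -(u-(i:ℝ)-1) = ((i:ℝ)+1) - u by ring]
      push_cast
      apply mul_le_mul hnorm le_rfl (by linarith) hδ
    have step2 : dist (plInterp q ((i:ℝ) + 1)) (plInterp q v) ≤ δ * (v - ((i:ℝ) + 1)) := by
      apply IHd _ _ (by positivity) hwv
      have : ⌊((i:ℝ) + 1)⌋₊ = i + 1 := by
        rw [show ((i:ℝ) + 1) = ((i + 1 : ℕ) : ℝ) by push_cast; ring, Nat.floor_natCast]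
      omega
    calc dist (plInterp q u) (plInterp q v)
        ≤ dist (plInterp q u) (plInterp q ((i:ℝ) + 1)) +
          dist (plInterp q ((i:ℝ) + 1)) (plInterp q v) := dist_triangle _ _ _
      _ ≤ δ * (((i:ℝ) + 1) - u) + δ * (v - ((i:ℝ) + 1)) := add_le_add step1 step2
      _ = δ * (v - u) := by ring

lemma plInterp_dist_le {q : ℕ → E} {δ : ℝ} (hq : ∀ i, dist (q i) (q (i + 1)) ≤ δ)
    {u v : ℝ} (hu : 0 ≤ u) (huv : u ≤ v) :
    dist (plInterp q u) (plInterp q v) ≤ δ * (v - u) :=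
  plInterp_lipschitz hq _ u v hu huv rfl

end PL

section Measure
open Metric Set MeasureTheory ENNReal
variable {X : Type*} [MetricSpace X] [MeasurableSpace X] [BorelSpace X]

variable {X : Type*} [MetricSpace X] [MeasurableSpace X] [BorelSpace X]

theorem hausdorff_ball_lb {K : Set X} (hK : IsCompact K) (hconn : IsConnected K)
    {x : X} (hx : x ∈ K) {r : ℝ} (hr : 0 ≤ r) (hy : ∃ y ∈ K, r < dist x y) :
    ENNReal.ofReal r ≤ μH[1] (K ∩ Metric.closedBall x r) := by
  haveI hκconn : ConnectedSpace ↥K := Subtype.connectedSpace hconn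
  haveI hκcpt : CompactSpace ↥K := isCompact_iff_compactSpace.mp hK
  set B : Set ↥K := {z | dist (z : X) x ≤ r} with hBdef
  have hBclosed : IsClosed B :=
    isClosed_le (continuous_subtype_val.dist continuous_const) continuous_const
  haveI : CompactSpace ↥B := isCompact_iff_compactSpace.mp hBclosed.isCompact
  have hxB : (⟨x, hx⟩ : ↥K) ∈ B := by simp [hBdef, hr]
  set xB : ↥B := ⟨⟨x, hx⟩, hxB⟩ with hxBdef
  set F : Set ↥B := {z | dist ((z : ↥K) : X) x = r} with hFdef
  -- boundary bumping: the connected component of x in B meets the sphere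
  have hmain : (connectedComponent xB ∩ F).Nonempty := by
    by_contra hemp
    rw [Set.not_nonempty_iff_eq_empty] at hemp
    have hFclosed : IsClosed F :=
      isClosed_eq ((continuous_subtype_val.comp continuous_subtype_val).dist
        continuous_const) continuous_const
    have hFcpt : IsCompact F := hFclosed.isCompact
    have hcover : F ⊆ ⋃ (s : {s : Set ↥B // IsClopen s ∧ xB ∈ s}), (↑s : Set ↥B)ᶜ := by
      intro z hz
      have hznc : z ∉ connectedComponent xB := by
        intro hzc
        exact absurd (Set.mem_inter hzc hz) (by rw [hemp]; exact id)
      rw [connectedComponent_eq_iInter_isClopen, Set.mem_iInter] at hznc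
      push_neg at hznc
      obtain ⟨s, hs⟩ := hznc
      exact Set.mem_iUnion.mpr ⟨s, hs⟩
    obtain ⟨t, ht⟩ := hFcpt.elim_finite_subcover _
      (fun s => s.2.1.isClosed.isOpen_compl) hcover
    set U : Set ↥B := ⋂ s ∈ t, (s : Set ↥B) with hUdef
    have hUclopen : IsClopen U := isClopen_biInter_finset (fun s _ => s.2.1)
    have hxU : xB ∈ U := Set.mem_iInter₂.mpr (fun s _ => s.2.2)
    have hUF : U ∩ F = ∅ := by
      rw [Set.eq_empty_iff_forall_notMem]
      rintro z ⟨hzU, hzF⟩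
      obtain ⟨s, hst, hzs⟩ := Set.mem_iUnion₂.mp (ht hzF)
      exact hzs (Set.mem_iInter₂.mp hzU s hst)
    -- push U down to a clopen subset of K
    set WK : Set ↥K := Subtype.val '' U with hWKdef
    have hWKclosed : IsClosed WK :=
      (hUclopen.isClosed.isCompact.image continuous_subtype_val).isClosed
    have hWKopen : IsOpen WK := by
      obtain ⟨O, hOopen, hOU⟩ := isOpen_induced_iff.mp hUclopen.isOpen
      have hWKeq : WK = O ∩ {z : ↥K | dist (z : X) x < r} := by
        apply Set.Subset.antisymm
        · rintro w ⟨u, huU, rfl⟩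
          refine ⟨by rw [← hOU] at huU; exact huU, ?_⟩
          have hle : dist ((u : ↥K) : X) x ≤ r := u.2
          have hne : dist ((u : ↥K) : X) x ≠ r := by
            intro heq
            have : u ∈ U ∩ F := ⟨huU, heq⟩
            rw [hUF] at this; exact this
          exact lt_of_le_of_ne hle hne
        · rintro z ⟨hzO, hzlt⟩
          have hzB : z ∈ B := by simpa [hBdef] using le_of_lt hzlt
          refine ⟨⟨z, hzB⟩, ?_, rfl⟩
          rw [← hOU]; exact hzO
      rw [hWKeq]
      exact hOopen.inter (isOpen_lt (continuous_subtype_val.dist continuous_const)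
        continuous_const)
    have hWz : WK = ∅ ∨ WK = Set.univ := isClopen_iff.mp ⟨hWKclosed, hWKopen⟩
    obtain ⟨y, hyK, hyr⟩ := hy
    rcases hWz with h | h
    · have : (⟨x, hx⟩ : ↥K) ∈ WK := ⟨xB, hxU, rfl⟩
      rw [h] at this; exact this
    · have : (⟨y, hyK⟩ : ↥K) ∈ WK := by rw [h]; trivial
      obtain ⟨u, _, hu⟩ := this
      have h2 : dist ((u : ↥K) : X) x ≤ r := u.2
      rw [hu] at h2
      simp only [dist_comm y x] at h2
      linarith
  obtain ⟨z, hzc, hzF⟩ := hmain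
  -- project to ℝ via the distance function
  set Cset : Set X := Subtype.val '' (Subtype.val '' connectedComponent xB) with hCdef
  have hCconn : IsPreconnected Cset := by
    apply IsPreconnected.image _ _ continuous_subtype_val.continuousOn
    apply IsPreconnected.image _ _ continuous_subtype_val.continuousOn
    exact isPreconnected_connectedComponent
  have hCsub : Cset ⊆ K ∩ Metric.closedBall x r := by
    rintro w ⟨u, ⟨v, _, rfl⟩, rfl⟩
    exact ⟨(v : ↥K).2, Metric.mem_closedBall.mpr v.2⟩
  have hxC : x ∈ Cset := ⟨⟨x, hx⟩, ⟨xB, mem_connectedComponent, rfl⟩, rfl⟩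
  have hzC : ((z : ↥K) : X) ∈ Cset := ⟨(z : ↥K), ⟨z, hzc, rfl⟩, rfl⟩
  set φ : X → ℝ := fun w => dist w x with hφdef
  have hφlip : LipschitzWith 1 φ := LipschitzWith.dist_left x
  have himg : Set.Icc (0:ℝ) r ⊆ φ '' Cset := by
    apply IsPreconnected.Icc_subset (hCconn.image φ hφlip.continuous.continuousOn)
    · exact ⟨x, hxC, by simp [hφdef]⟩
    · exact ⟨((z : ↥K) : X), hzC, hzF⟩
  calc ENNReal.ofReal r = volume (Set.Icc (0:ℝ) r) := by rw [Real.volume_Icc, sub_zero]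
    _ = μH[1] (Set.Icc (0:ℝ) r) := by rw [MeasureTheory.hausdorffMeasure_real]
    _ ≤ μH[1] (φ '' Cset) := measure_mono himg
    _ ≤ (1:NNReal) ^ (1:ℝ) * μH[1] Cset :=
        hφlip.hausdorffMeasure_image_le zero_le_one Cset
    _ = μH[1] Cset := by simp
    _ ≤ μH[1] (K ∩ Metric.closedBall x r) := measure_mono hCsub

variable {X : Type*} [MetricSpace X] [MeasurableSpace X] [BorelSpace X]


theorem card_le_of_separated {K : Set X} (hK : IsCompact K) (hconn : IsConnected K)
    {S : Finset X} (hSK : ∀ p ∈ S, p ∈ K) {ε : ℝ} (hε : 0 < ε)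
    (hsep : ∀ p ∈ S, ∀ q ∈ S, p ≠ q → ε < dist p q) (h2 : 2 ≤ S.card) :
    (S.card : ℝ≥0∞) * ENNReal.ofReal (ε / 2) ≤ μH[1] K := by
  classical
  set ν : Measure X := (μH[1] : Measure X).restrict K with hν
  have hball : ∀ p ∈ S, ENNReal.ofReal (ε / 2) ≤ ν (Metric.closedBall p (ε / 2)) := by
    intro p hp
    have hy : ∃ y ∈ K, ε / 2 < dist p y := by
      obtain ⟨q, hq, hpq⟩ := Finset.exists_mem_ne (show 1 < S.card by omega) p
      exact ⟨q, hSK q hq, by have := hsep p hp q hq (Ne.symm hpq); linarith⟩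
    have := hausdorff_ball_lb hK hconn (hSK p hp) (by linarith) hy
    rwa [hν, Measure.restrict_apply measurableSet_closedBall, Set.inter_comm]
  have hdisj : (↑S : Set X).PairwiseDisjoint (fun p => Metric.closedBall p (ε / 2)) := by
    intro p hp q hq hpq
    apply Set.disjoint_left.mpr
    intro z hzp hzq
    have h1 : dist z p ≤ ε / 2 := Metric.mem_closedBall.mp hzp
    have h2 : dist z q ≤ ε / 2 := Metric.mem_closedBall.mp hzq
    have h3 : ε < dist p q := hsep p hp q hq hpq
    have : dist p q ≤ dist z p + dist z q := by
      rw [dist_comm z p] at h1 ⊢; exact dist_triangle _ _ _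
    linarith
  calc (S.card : ℝ≥0∞) * ENNReal.ofReal (ε / 2)
      = ∑ _p ∈ S, ENNReal.ofReal (ε / 2) := by rw [Finset.sum_const, nsmul_eq_mul]
    _ ≤ ∑ p ∈ S, ν (Metric.closedBall p (ε / 2)) := Finset.sum_le_sum hball
    _ = ν (⋃ p ∈ S, Metric.closedBall p (ε / 2)) :=
        (measure_biUnion_finset hdisj (fun p _ => measurableSet_closedBall)).symm
    _ ≤ ν Set.univ := measure_mono (Set.subset_univ _)
    _ = μH[1] K := by rw [hν, Measure.restrict_apply_univ]

theorem exists_net {K : Set X} (hK : IsCompact K) (hne : K.Nonempty) {ε : ℝ} (hε : 0 < ε) :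
    ∃ S : Finset X, S.Nonempty ∧ (∀ p ∈ S, p ∈ K) ∧
      (∀ p ∈ S, ∀ q ∈ S, p ≠ q → ε < dist p q) ∧
      ∀ z ∈ K, ∃ p ∈ S, dist z p < 2 * ε := by
  classical
  have hcover : K ⊆ ⋃ x ∈ K, Metric.ball x ε :=
    fun z hz => Set.mem_biUnion hz (Metric.mem_ball_self hε)
  obtain ⟨b, hbK, hbfin, hbcov⟩ :=
    hK.elim_finite_subcover_image (fun x _ => Metric.isOpen_ball) hcover
  set t : Finset X := hbfin.toFinset with htdef
  have htK : ∀ x ∈ t, x ∈ K := fun x hx => hbK (hbfin.mem_toFinset.mp hx)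
  have htcov : ∀ z ∈ K, ∃ x ∈ t, dist z x < ε := by
    intro z hz
    obtain ⟨x, hx, hzx⟩ := Set.mem_iUnion₂.mp (hbcov hz)
    exact ⟨x, hbfin.mem_toFinset.mpr hx, Metric.mem_ball.mp hzx⟩
  set P : Finset (Finset X) :=
    t.powerset.filter (fun S => ∀ p ∈ S, ∀ q ∈ S, p ≠ q → ε < dist p q) with hP
  have hPne : P.Nonempty := ⟨∅, by simp [hP]⟩
  obtain ⟨S, hSP, hSmax⟩ := P.exists_max_image Finset.card hPne
  have hSsub : S ⊆ t := Finset.mem_powerset.mp (Finset.mem_filter.mp hSP).1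
  have hSsep : ∀ p ∈ S, ∀ q ∈ S, p ≠ q → ε < dist p q := (Finset.mem_filter.mp hSP).2
  have hSnear : ∀ x ∈ t, ∃ p ∈ S, dist x p ≤ ε := by
    intro x hx
    by_cases hxS : x ∈ S
    · exact ⟨x, hxS, by simp [hε.le]⟩
    by_contra hnot
    push_neg at hnot
    have hins : insert x S ∈ P := by
      refine Finset.mem_filter.mpr ⟨Finset.mem_powerset.mpr (Finset.insert_subset hx hSsub), ?_⟩
      intro p hp q hq hpq
      rcases Finset.mem_insert.mp hp with rfl | hpS
      · rcases Finset.mem_insert.mp hq with rfl | hqS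
        · exact absurd rfl hpq
        · exact hnot q hqS
      · rcases Finset.mem_insert.mp hq with rfl | hqS
        · rw [dist_comm]; exact hnot p hpS
        · exact hSsep p hpS q hqS hpq
    have := hSmax _ hins
    rw [Finset.card_insert_of_notMem hxS] at this
    omega
  have hScov : ∀ z ∈ K, ∃ p ∈ S, dist z p < 2 * ε := by
    intro z hz
    obtain ⟨x, hxt, hzx⟩ := htcov z hz
    obtain ⟨p, hpS, hxp⟩ := hSnear x hxt
    exact ⟨p, hpS, by calc dist z p ≤ dist z x + dist x p := dist_triangle _ _ _
      _ < 2 * ε := by linarith⟩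
  obtain ⟨z, hz⟩ := hne
  obtain ⟨p, hpS, _⟩ := hScov z hz
  exact ⟨S, ⟨p, hpS⟩, fun p hp => htK p (hSsub hp), hSsep, hScov⟩

/-- A `2ε`-net of a preconnected set is `4ε`-walk-connected. -/
theorem net_wconn {K : Set X} (hconn : IsPreconnected K)
    {S : Finset X} (hSK : ∀ p ∈ S, p ∈ K) {ε : ℝ}
    (hScov : ∀ z ∈ K, ∃ p ∈ S, dist z p < 2 * ε) :
    ∀ T ⊆ S, T.Nonempty → (∃ b ∈ S, b ∉ T) → ∃ a ∈ T, ∃ b ∈ S, b ∉ T ∧ dist a b ≤ 4 * ε := by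
  intro T hTS ⟨a, haT⟩ ⟨b, hbS, hbT⟩
  set A : Set X := ⋃ p ∈ (↑T : Set X), Metric.ball p (2 * ε) with hA
  set Bs : Set X := ⋃ p ∈ (↑S : Set X) \ (↑T : Set X), Metric.ball p (2 * ε) with hB
  have hε : 0 < ε := by
    obtain ⟨p, _, hp⟩ := hScov a (hSK a (hTS haT))
    have := dist_nonneg (x := a) (y := p); linarith
  have hAopen : IsOpen A := isOpen_biUnion (fun _ _ => Metric.isOpen_ball)
  have hBopen : IsOpen Bs := isOpen_biUnion (fun _ _ => Metric.isOpen_ball)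
  have hKAB : K ⊆ A ∪ Bs := by
    intro z hz
    obtain ⟨p, hpS, hzp⟩ := hScov z hz
    by_cases hpT : p ∈ T
    · exact Or.inl (Set.mem_biUnion hpT (Metric.mem_ball.mpr hzp))
    · exact Or.inr (Set.mem_biUnion ⟨hpS, hpT⟩ (Metric.mem_ball.mpr hzp))
  have hKA : (K ∩ A).Nonempty :=
    ⟨a, hSK a (hTS haT), Set.mem_biUnion haT (Metric.mem_ball_self (by linarith))⟩
  have hKB : (K ∩ Bs).Nonempty :=
    ⟨b, hSK b hbS, Set.mem_biUnion ⟨hbS, hbT⟩ (Metric.mem_ball_self (by linarith))⟩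
  obtain ⟨z, hzK, hzA, hzB⟩ := hconn A Bs hAopen hBopen hKAB hKA hKB
  obtain ⟨p, hpT, hzp⟩ := Set.mem_iUnion₂.mp hzA
  obtain ⟨q, hqST, hzq⟩ := Set.mem_iUnion₂.mp hzB
  refine ⟨p, hpT, q, hqST.1, hqST.2, ?_⟩
  have h1 : dist z p < 2 * ε := Metric.mem_ball.mp hzp
  have h2 : dist z q < 2 * ε := Metric.mem_ball.mp hzq
  calc dist p q ≤ dist p z + dist z q := dist_triangle _ _ _
    _ ≤ 4 * ε := by rw [dist_comm p z]; linarith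

end Measure

section Scale
open Metric Set MeasureTheory ENNReal List
variable {E : Type*} [NormedAddCommGroup E] [NormedSpace ℝ E]
  [MeasurableSpace E] [BorelSpace E]

theorem exists_scale_curve {K : Set E} (hK : IsCompact K) (hne : K.Nonempty)
    (hconn : IsConnected K) (hfin : μH[1] K < ⊤) {ε : ℝ} (hε : 0 < ε) :
    ∃ g : ℝ → E,
      (∀ s ∈ Set.Icc (0:ℝ) 1, ∀ t ∈ Set.Icc (0:ℝ) 1,
        dist (g s) (g t) ≤ 16 * (μH[1] K).toReal * dist s t) ∧
      (∀ t ∈ Set.Icc (0:ℝ) 1, ∃ p ∈ K, dist (g t) p ≤ 4 * ε) ∧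
      (∀ z ∈ K, ∃ t ∈ Set.Icc (0:ℝ) 1, dist z (g t) < 2 * ε) := by
  set μ : ℝ := (μH[1] K).toReal with hμdef
  have hμ0 : 0 ≤ μ := ENNReal.toReal_nonneg
  obtain ⟨S, ⟨s₀, hs₀⟩, hSK, hSsep, hScov⟩ := exists_net hK hne hε
  obtain ⟨l, hlne, hlhead, hllast, hlsub, hlcover, hlchain, hllen⟩ :=
    exists_walk (4 * ε) S.card S le_rfl (show WConn (4 * ε) S from net_wconn hconn.isPreconnected hSK hScov) s₀ hs₀
  set m : ℕ := l.length - 1 with hmdef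
  have hlpos : 1 ≤ l.length := List.length_pos_iff.mpr hlne
  have hidx : ∀ i : ℕ, min i m < l.length := by intro i; omega
  set q : ℕ → E := fun i => l.getD (min i m) s₀ with hqdef
  have hqget : ∀ i : ℕ, q i = l.get ⟨min i m, hidx i⟩ := by
    intro i; rw [hqdef]; exact List.getD_eq_get _ _ ⟨min i m, hidx i⟩
  have hqmem : ∀ i, q i ∈ S := by
    intro i; rw [hqget]; exact hlsub _ (l.get_mem _)
  have hq : ∀ i, dist (q i) (q (i + 1)) ≤ 4 * ε := by
    intro i
    by_cases hi : i < m
    · have h1 : min i m = i := by omega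
      have h2 : min (i + 1) m = i + 1 := by omega
      have := List.isChain_iff_getElem.mp hlchain i (by omega)
      rw [hqget, hqget]
      simp only [h1, h2]
      convert this using 2 <;> simp
    · have h1 : min i m = m := by omega
      have h2 : min (i + 1) m = m := by omega
      rw [hqget, hqget]
      simp only [h1, h2]
      simp
      positivity
  set g : ℝ → E := fun t => plInterp q (t * m) with hgdef
  -- speed bound
  have hspeed : 4 * ε * m ≤ 16 * μ := by
    by_cases hcard : 2 ≤ S.card
    · have hb := card_le_of_separated hK hconn hSK hε hSsep hcard
      have hb' : (S.card : ℝ≥0∞) * ENNReal.ofReal (ε / 2) =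
          ENNReal.ofReal (S.card * (ε / 2)) := by
        rw [ENNReal.ofReal_mul (by positivity)]
        congr 1
        exact (ENNReal.ofReal_natCast _).symm
      rw [hb'] at hb
      have hcardR : (S.card : ℝ) * (ε / 2) ≤ μ := by
        have h3 := ENNReal.toReal_mono hfin.ne hb
        rwa [ENNReal.toReal_ofReal (by positivity)] at h3
      have hm2 : (m : ℝ) ≤ 2 * S.card := by
        have : m ≤ 2 * S.card := by omega
        exact_mod_cast this
      nlinarith [hε.le]
    · have hS1 : S.card = 1 := by
        have : 1 ≤ S.card := Finset.card_pos.mpr ⟨s₀, hs₀⟩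
        omega
      have hm0 : m = 0 := by omega
      rw [hm0]
      simp
      positivity
  -- Lipschitz bound
  have hglip : ∀ s ∈ Set.Icc (0:ℝ) 1, ∀ t ∈ Set.Icc (0:ℝ) 1,
      dist (g s) (g t) ≤ 16 * μ * dist s t := by
    have key : ∀ s t : ℝ, 0 ≤ s → s ≤ t → dist (g s) (g t) ≤ 16 * μ * (t - s) := by
      intro s t hs hst
      have h1 : dist (plInterp q (s * m)) (plInterp q (t * m)) ≤ 4 * ε * (t * m - s * m) :=
        plInterp_dist_le hq (by positivity) (by
          apply mul_le_mul_of_nonneg_right hst (Nat.cast_nonneg m))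
      have h2 : 4 * ε * (t * m - s * m) = (4 * ε * m) * (t - s) := by ring
      calc dist (g s) (g t) ≤ 4 * ε * (t * m - s * m) := h1
        _ = (4 * ε * m) * (t - s) := h2
        _ ≤ 16 * μ * (t - s) := mul_le_mul_of_nonneg_right hspeed (by linarith)
    intro s hs t ht
    rcases le_total s t with h | h
    · rw [Real.dist_eq, abs_of_nonpos (by linarith)]
      have := key s t hs.1 h
      calc dist (g s) (g t) ≤ 16 * μ * (t - s) := this
        _ = 16 * μ * -(s - t) := by ring
    · rw [Real.dist_eq, abs_of_nonneg (by linarith)]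
      rw [dist_comm]
      exact le_trans (key t s ht.1 h) (by ring_nf; rfl)
  refine ⟨g, hglip, ?_, ?_⟩
  · -- closeness to K
    intro t ht
    refine ⟨q ⌊t * m⌋₊, hSK _ (hqmem _), ?_⟩
    exact plInterp_dist_floor hq (mul_nonneg ht.1 (Nat.cast_nonneg m))
  · -- coverage
    intro z hz
    obtain ⟨p, hpS, hzp⟩ := hScov z hz
    obtain ⟨⟨i, hi⟩, hip⟩ := List.mem_iff_get.mp (hlcover p hpS)
    have him : i ≤ m := by omega
    by_cases hm0 : m = 0
    · refine ⟨0, ⟨le_rfl, zero_le_one⟩, ?_⟩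
      have : g 0 = q 0 := by
        rw [hgdef]
        simp only [zero_mul]
        rw [show (0:ℝ) = ((0:ℕ):ℝ) by norm_num, plInterp_natCast q 0]
      rw [this, hqget]
      have hfeq : (⟨min 0 m, hidx 0⟩ : Fin l.length) = ⟨i, hi⟩ := by
        apply Fin.ext; simp only []; omega
      rw [hfeq, hip]
      exact hzp
    · refine ⟨(i : ℝ) / m, ⟨by positivity, ?_⟩, ?_⟩
      · rw [div_le_one (by exact_mod_cast Nat.pos_of_ne_zero hm0)]
        exact_mod_cast him
      · have hmne : (m : ℝ) ≠ 0 := Nat.cast_ne_zero.mpr hm0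
        have : g ((i:ℝ)/m) = q i := by
          rw [hgdef]
          simp only [div_mul_cancel₀ _ hmne]
          rw [show ((i:ℕ):ℝ) = ((i:ℕ):ℝ) from rfl, plInterp_natCast q i]
        rw [this, hqget]
        have hfeq : (⟨min i m, hidx i⟩ : Fin l.length) = ⟨i, hi⟩ := by
          apply Fin.ext; simp only []; omega
        rw [hfeq, hip]
        exact hzp

end Scale

end WazewskiAux

theorem stmt_10 {n : ℕ}
    (K : Set (EuclideanSpace ℝ (Fin n)))
    (hne : K.Nonempty) (hcpt : IsCompact K) (hconn : IsConnected K)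
    (hfin : μH[1] K < ⊤) :
    ∃ f : ℝ → EuclideanSpace ℝ (Fin n), ∃ C : NNReal,
      LipschitzOnWith C f (Set.Icc 0 1) ∧ f '' Set.Icc (0:ℝ) 1 = K := by
  classical
  set Creal : ℝ := 16 * (μH[1] K).toReal with hCreal
  have hCreal0 : 0 ≤ Creal := by positivity
  set ε : ℕ → ℝ := fun k => 1 / (k + 1) with hεdef
  have hεpos : ∀ k, 0 < ε k := fun k => by positivity
  have hεle1 : ∀ k, ε k ≤ 1 := fun k => by
    rw [hεdef]
    rw [div_le_one (by positivity)]
    push_cast; linarith [Nat.cast_nonneg (α := ℝ) k]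
  have hεlim : Filter.Tendsto ε Filter.atTop (nhds 0) := tendsto_one_div_add_atTop_nhds_zero_nat
  choose g hglip hgclose hgcov using
    fun k => exists_scale_curve hcpt hne hconn hfin (hεpos k)
  -- uniform boundedness
  obtain ⟨x₀, hx₀⟩ := id hne
  obtain ⟨R, hR⟩ := hcpt.isBounded.subset_closedBall x₀
  set M : Set (EuclideanSpace ℝ (Fin n)) := Metric.closedBall x₀ (R + 4) with hM
  have hMcpt : IsCompact M := isCompact_closedBall x₀ _
  have hgM : ∀ k, ∀ t ∈ Set.Icc (0:ℝ) 1, g k t ∈ M := by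
    intro k t ht
    obtain ⟨p, hpK, hpd⟩ := hgclose k t ht
    have h1 : dist p x₀ ≤ R := Metric.mem_closedBall.mp (hR hpK)
    have h2 : 4 * ε k ≤ 4 := by have := hεle1 k; linarith
    exact Metric.mem_closedBall.mpr
      (by calc dist (g k t) x₀ ≤ dist (g k t) p + dist p x₀ := dist_triangle _ _ _
        _ ≤ R + 4 := by linarith)
  set U : Ultrafilter ℕ := Filter.hyperfilter ℕ with hU
  have hUle : (U : Filter ℕ) ≤ Filter.atTop := Nat.hyperfilter_le_atTop
  -- ultrafilter limits
  have hlim : ∀ t ∈ Set.Icc (0:ℝ) 1, ∃ y, Filter.Tendsto (fun k => g k t) (U : Filter ℕ) (nhds y) := by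
    intro t ht
    obtain ⟨y, _, hy⟩ := hMcpt.ultrafilter_le_nhds' (U.map (fun k => g k t))
      (Ultrafilter.mem_map.mpr (Filter.univ_mem' (fun k => hgM k t ht)))
    exact ⟨y, hy⟩
  set f : ℝ → EuclideanSpace ℝ (Fin n) := fun t => if h : t ∈ Set.Icc (0:ℝ) 1 then (hlim t h).choose else x₀
    with hfdef
  have hf : ∀ t (ht : t ∈ Set.Icc (0:ℝ) 1),
      Filter.Tendsto (fun k => g k t) (U : Filter ℕ) (nhds (f t)) := by
    intro t ht
    rw [hfdef]
    simp only [dif_pos ht]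
    exact (hlim t ht).choose_spec
  -- conclusion
  refine ⟨f, Creal.toNNReal, ?_, ?_⟩
  · rw [lipschitzOnWith_iff_dist_le_mul]
    intro s hs t ht
    rw [Real.coe_toNNReal _ hCreal0]
    have h1 : Filter.Tendsto (fun k => dist (g k s) (g k t)) (U : Filter ℕ)
        (nhds (dist (f s) (f t))) := (hf s hs).dist (hf t ht)
    exact le_of_tendsto h1 (Filter.Eventually.of_forall (fun k => hglip k s hs t ht))
  · apply Set.Subset.antisymm
    · -- image ⊆ K
      rintro - ⟨t, ht, rfl⟩
      have h1 : Filter.Tendsto (fun k => Metric.infDist (g k t) K) (U : Filter ℕ)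
          (nhds (Metric.infDist (f t) K)) :=
        ((Metric.continuous_infDist_pt K).tendsto _).comp (hf t ht)
      have h2 : Filter.Tendsto (fun k => 4 * ε k) (U : Filter ℕ) (nhds 0) := by
        have := hεlim.const_mul (4:ℝ)
        rw [mul_zero] at this
        exact this.mono_left hUle
      have h3 : Metric.infDist (f t) K ≤ 0 := by
        refine le_of_tendsto_of_tendsto' h1 h2 (fun k => ?_)
        obtain ⟨p, hpK, hpd⟩ := hgclose k t ht
        exact le_trans (Metric.infDist_le_dist_of_mem hpK) hpd
      have h4 : Metric.infDist (f t) K = 0 :=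
        le_antisymm h3 Metric.infDist_nonneg
      exact (hcpt.isClosed.mem_iff_infDist_zero hne).mpr h4
    · -- K ⊆ image
      intro x hx
      choose tseq htmem htdist using fun k => hgcov k x hx
      obtain ⟨tstar, htstar, httend⟩ := isCompact_Icc.ultrafilter_le_nhds' (U.map tseq)
        (Ultrafilter.mem_map.mpr (Filter.univ_mem' (fun k => htmem k)))
      have httend' : Filter.Tendsto tseq (U : Filter ℕ) (nhds tstar) := httend
      set b : ℕ → ℝ := fun k =>
        2 * ε k + Creal * dist (tseq k) tstar + dist (g k tstar) (f tstar) with hbdef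
      have hb : ∀ k, dist x (f tstar) ≤ b k := by
        intro k
        have h1 : dist x (g k (tseq k)) < 2 * ε k := htdist k
        have h2 : dist (g k (tseq k)) (g k tstar) ≤ Creal * dist (tseq k) tstar :=
          hglip k (tseq k) (htmem k) tstar htstar
        calc dist x (f tstar)
            ≤ dist x (g k (tseq k)) + dist (g k (tseq k)) (g k tstar) +
              dist (g k tstar) (f tstar) := dist_triangle4 _ _ _ _
          _ ≤ b k := by rw [hbdef]; dsimp only; linarith
      have hbtend : Filter.Tendsto b (U : Filter ℕ) (nhds 0) := by
        have t1 : Filter.Tendsto (fun k => 2 * ε k) (U : Filter ℕ) (nhds 0) := by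
          have := hεlim.const_mul (2:ℝ)
          rw [mul_zero] at this
          exact this.mono_left hUle
        have t2 : Filter.Tendsto (fun k => Creal * dist (tseq k) tstar) (U : Filter ℕ) (nhds 0) := by
          have := (httend'.dist (tendsto_const_nhds (x := tstar))).const_mul Creal
          rw [dist_self, mul_zero] at this
          exact this
        have t3 : Filter.Tendsto (fun k => dist (g k tstar) (f tstar)) (U : Filter ℕ) (nhds 0) := by
          have := (hf tstar htstar).dist (tendsto_const_nhds (x := f tstar))
          rw [dist_self] at this
          exact this
        have := (t1.add t2).add t3
        rw [add_zero, add_zero] at this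
        exact this
      have h5 : dist x (f tstar) ≤ 0 :=
        ge_of_tendsto hbtend (Filter.Eventually.of_forall hb)
      have h6 : x = f tstar := by
        have := le_antisymm h5 dist_nonneg
        exact (eq_of_dist_eq_zero this)
      exact ⟨tstar, htstar, h6.symm⟩
end
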